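/- Let S = (x₁,y₁),…,(xₙ,yₙ) be labeled examples from a domain X with yᵢ ∈ {−1,+1}, let κ ∈ (0,1), γ ∈ (0,1), and set λ = γ/4. Let Γ be the set of bounded measures on [n] of density at least κ and μ₁(i) = κ for all i. Suppose h₁,…,h_T : X → [−1,1] is a sequence of hypotheses such that, defining losses ℓ_j(i) = 1 − (1/2)|h_j(xᵢ) − yᵢ| and measures μ_t = Π_Γ( i ↦ e^{−λ·Σ_{j<t} ℓ_j(i)}·μ₁(i) ), each h_t has advantage γ under the induced distribution μ̂_t, i.e., (1/2)·Σᵢ μ̂_t(i)|h_t(xᵢ) − yᵢ| ≤ 1/2 − γ. If T ≥ 16·log(1/κ)/γ², then the aggregated hypothesis H(x) = (1/T)·Σ_{t=1}^T h_t(x) satisfies: (i) good margin — the number of indices i with yᵢ·H(xᵢ) ≤ γ is at most κn; and (ii) smoothness — every distribution μ̂_t satisfies μ̂_t(i) ≤ 1/(κn) for all i. -/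

import Mathlib

/-- KL divergence between bounded measures on `Fin n`. -/
noncomputable def KLdiv {n : ℕ} (μ₁ μ₂ : Fin n → ℝ) : ℝ :=
  ∑ i, (μ₁ i * Real.log (μ₁ i / μ₂ i) + μ₂ i - μ₁ i)

/-- A bounded measure on `[n]` is a function into `[0,1]`. -/
def IsBddMeasure {n : ℕ} (μ : Fin n → ℝ) : Prop := ∀ i, μ i ∈ Set.Icc (0:ℝ) 1

/-- `ν` is the Bregman projection of `μ̃` onto the set `Γ` of κ-dense bounded
measures: it lies in `Γ` and minimizes `KL(·‖μ̃)` there. -/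
def IsBregmanProj {n : ℕ} (κ : ℝ) (μt ν : Fin n → ℝ) : Prop :=
  (IsBddMeasure ν ∧ κ * n ≤ ∑ i, ν i) ∧
    ∀ ρ : Fin n → ℝ, IsBddMeasure ρ → κ * n ≤ ∑ i, ρ i → KLdiv ν μt ≤ KLdiv ρ μt

lemma gibbs_strict {a b : ℝ} (ha : 0 ≤ a) (hb : 0 < b) (hne : a ≠ b) :
    0 < a * Real.log (a / b) + b - a := by
  rcases eq_or_lt_of_le ha with h0 | h0
  · simp [← h0]; exact hb
  · have hba : 0 < b / a := div_pos hb h0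
    have h1 : Real.log (b / a) < b / a - 1 := by
      apply Real.log_lt_sub_one_of_pos hba
      intro hcon
      apply hne
      field_simp at hcon
      linarith
    have h2 : Real.log (a / b) = - Real.log (b / a) := by
      rw [← Real.log_inv, inv_div]
    have h3 : a * (b / a) = b := by field_simp
    have h4 : a * Real.log (b / a) < a * (b / a - 1) :=
      mul_lt_mul_of_pos_left h1 h0
    rw [h2]; nlinarith
lemma gibbs {a b : ℝ} (ha : 0 ≤ a) (hb : 0 < b) :
    0 ≤ a * Real.log (a / b) + b - a := by
  rcases eq_or_ne a b with rfl | hne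
  · rw [div_self (ne_of_gt hb), Real.log_one]; ring_nf; exact le_refl _
  · exact le_of_lt (gibbs_strict ha hb hne)

lemma KLdiv_nonneg {n : ℕ} {ρ b : Fin n → ℝ} (hρ : ∀ i, 0 ≤ ρ i) (hb : ∀ i, 0 < b i) :
    0 ≤ KLdiv ρ b :=
  Finset.sum_nonneg fun i _ => gibbs (hρ i) (hb i)

lemma gibbs_mono {b a₁ a₂ : ℝ} (hb : 0 < b) (h1 : b ≤ a₁) (h12 : a₁ < a₂) :
    a₁ * Real.log (a₁ / b) + b - a₁ < a₂ * Real.log (a₂ / b) + b - a₂ := by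
  have ha1 : 0 < a₁ := lt_of_lt_of_le hb h1
  have ha2 : 0 < a₂ := ha1.trans h12
  have key : 0 < a₂ * Real.log (a₂ / a₁) + a₁ - a₂ :=
    gibbs_strict (le_of_lt ha2) ha1 (ne_of_gt h12)
  have hlog : Real.log (a₂ / b) = Real.log (a₂ / a₁) + Real.log (a₁ / b) := by
    rw [← Real.log_mul (by positivity) (by positivity)]
    congr 1; field_simp
  have hl1 : 0 ≤ Real.log (a₁ / b) := Real.log_nonneg ((one_le_div hb).mpr h1)
  have h5 : a₁ * Real.log (a₁ / b) ≤ a₂ * Real.log (a₁ / b) :=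
    mul_le_mul_of_nonneg_right (le_of_lt h12) hl1
  nlinarith [hlog]

/-- The Bregman projection onto the dense set dominates the base measure pointwise. -/
lemma proj_ge {n : ℕ} {κ : ℝ} {b μ : Fin n → ℝ}
    (hb : ∀ i, 0 < b i) (hb1 : ∀ i, b i ≤ 1) (hp : IsBregmanProj κ b μ) :
    ∀ i, b i ≤ μ i := by
  by_contra hcon
  push_neg at hcon
  obtain ⟨i0, hi0⟩ := hcon
  set ρ : Fin n → ℝ := fun j => max (μ j) (b j) with hρdef
  have hbdd : IsBddMeasure ρ := by
    intro j
    exact ⟨le_trans (hp.1.1 j).1 (le_max_left _ _),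
      max_le (hp.1.1 j).2 (hb1 j)⟩
  have hsum : κ * n ≤ ∑ i, ρ i :=
    le_trans hp.1.2 (Finset.sum_le_sum fun j _ => le_max_left _ _)
  have hlt : KLdiv ρ b < KLdiv μ b := by
    apply Finset.sum_lt_sum
    · intro j _
      rcases le_or_gt (b j) (μ j) with hj | hj
      · simp [hρdef, max_eq_left hj]
      · have : ρ j = b j := max_eq_right (le_of_lt hj)
        rw [this, div_self (ne_of_gt (hb j)), Real.log_one]
        have := gibbs_strict (hp.1.1 j).1 (hb j) (ne_of_lt hj)
        linarith
    · refine ⟨i0, Finset.mem_univ _, ?_⟩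
      have : ρ i0 = b i0 := max_eq_right (le_of_lt hi0)
      rw [this, div_self (ne_of_gt (hb i0)), Real.log_one]
      have := gibbs_strict (hp.1.1 i0).1 (hb i0) (ne_of_lt hi0)
      linarith
  exact absurd (hp.2 ρ hbdd hsum) (not_le.mpr hlt)

/-- If the base measure has total mass at most `κn`, the projection has mass exactly `κn`. -/
lemma proj_sum_eq {n : ℕ} {κ : ℝ} {b μ : Fin n → ℝ}
    (hb : ∀ i, 0 < b i) (hsumb : ∑ i, b i ≤ κ * n) (hp : IsBregmanProj κ b μ) :
    ∑ i, μ i = κ * n := by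
  refine le_antisymm ?_ hp.1.2
  by_contra hcon
  push_neg at hcon
  have hex : ∃ i, b i < μ i := by
    by_contra hall
    push_neg at hall
    have : (∑ i, μ i) ≤ ∑ i, b i := Finset.sum_le_sum fun j _ => hall j
    linarith
  obtain ⟨i0, hi0⟩ := hex
  set δ : ℝ := (∑ i, μ i) - κ * n with hδdef
  have hδ : 0 < δ := by simp [hδdef]; linarith
  set v : ℝ := max (b i0) (μ i0 - δ) with hvdef
  have hv1 : v < μ i0 := max_lt hi0 (by linarith)
  have hv2 : b i0 ≤ v := le_max_left _ _
  set ρ : Fin n → ℝ := Function.update μ i0 v with hρdef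
  have hbdd : IsBddMeasure ρ := by
    intro j
    rcases eq_or_ne j i0 with rfl | hj
    · simp only [hρdef, Function.update_self]
      exact ⟨le_trans (le_of_lt (hb j)) hv2, le_trans (le_of_lt hv1) (hp.1.1 j).2⟩
    · simp only [hρdef, Function.update_of_ne hj]; exact hp.1.1 j
  have hsumρ : ∑ i, ρ i = (∑ i, μ i) - μ i0 + v := by
    rw [hρdef, Finset.sum_update_of_mem (Finset.mem_univ i0)]
    have : ∑ j ∈ Finset.univ \ {i0}, μ j = (∑ i, μ i) - μ i0 := by
      rw [Finset.sum_sdiff_eq_sub (Finset.singleton_subset_iff.mpr (Finset.mem_univ i0))]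
      simp
    rw [this]; ring
  have hsum : κ * n ≤ ∑ i, ρ i := by
    rw [hsumρ]
    have : μ i0 - δ ≤ v := le_max_right _ _
    linarith
  have hlt : KLdiv ρ b < KLdiv μ b := by
    apply Finset.sum_lt_sum
    · intro j _
      rcases eq_or_ne j i0 with rfl | hj
      · simp only [hρdef, Function.update_self]
        exact le_of_lt (gibbs_mono (hb j) hv2 hv1)
      · simp [hρdef, Function.update_of_ne hj]
    · refine ⟨i0, Finset.mem_univ _, ?_⟩
      simp only [hρdef, Function.update_self]
      exact gibbs_mono (hb i0) hv2 hv1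
  exact absurd (hp.2 ρ hbdd hsum) (not_le.mpr hlt)

/-- Generalized Pythagoras inequality for the Bregman projection. -/
lemma proj_pythagoras {n : ℕ} {κ : ℝ} {b μ : Fin n → ℝ}
    (hb : ∀ i, 0 < b i) (hμpos : ∀ i, 0 < μ i)
    (hp : IsBregmanProj κ b μ) {ρ : Fin n → ℝ}
    (hρ : IsBddMeasure ρ) (hρs : κ * n ≤ ∑ i, ρ i) :
    KLdiv μ b + KLdiv ρ μ ≤ KLdiv ρ b := by
  set E : ℝ := ∑ i, (ρ i - μ i) * Real.log (μ i / b i) with hEdef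
  have hident : KLdiv ρ b - KLdiv μ b - KLdiv ρ μ = E := by
    rw [hEdef, KLdiv, KLdiv, KLdiv, ← Finset.sum_sub_distrib, ← Finset.sum_sub_distrib]
    apply Finset.sum_congr rfl
    intro i _
    rcases eq_or_lt_of_le (hρ i).1 with h0 | h0
    · rw [← h0]; simp; ring
    · have e1 : Real.log (ρ i / b i) = Real.log (ρ i) - Real.log (b i) :=
        Real.log_div (ne_of_gt h0) (ne_of_gt (hb i))
      have e2 : Real.log (ρ i / μ i) = Real.log (ρ i) - Real.log (μ i) :=
        Real.log_div (ne_of_gt h0) (ne_of_gt (hμpos i))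
      have e3 : Real.log (μ i / b i) = Real.log (μ i) - Real.log (b i) :=
        Real.log_div (ne_of_gt (hμpos i)) (ne_of_gt (hb i))
      rw [e1, e2, e3]; ring
  have hE : 0 ≤ E := by
    by_contra hEneg
    push_neg at hEneg
    set C : ℝ := ∑ i, (ρ i - μ i) ^ 2 / μ i with hCdef
    have hC : 0 ≤ C := Finset.sum_nonneg fun i _ => div_nonneg (sq_nonneg _) (le_of_lt (hμpos i))
    set s : ℝ := min (1 / 2) (-E / (2 * C + 1)) with hsdef
    have hs0 : 0 < s := lt_min (by norm_num) (div_pos (by linarith) (by linarith))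
    have hs1 : s < 1 := lt_of_le_of_lt (min_le_left _ _) (by norm_num)
    have hsE : s ≤ -E / (2 * C + 1) := min_le_right _ _
    set σ : Fin n → ℝ := fun i => μ i + s * (ρ i - μ i) with hσdef
    have hσi : ∀ i, σ i = μ i + s * (ρ i - μ i) := fun i => rfl
    have hσpos : ∀ i, 0 < σ i := by
      intro i
      have h1 : 0 < (1 - s) * μ i := mul_pos (by linarith) (hμpos i)
      have h2 : 0 ≤ s * ρ i := mul_nonneg (le_of_lt hs0) (hρ i).1
      have : σ i = (1 - s) * μ i + s * ρ i := by rw [hσi i]; ring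
      rw [this]; linarith
    have hσbdd : IsBddMeasure σ := by
      intro i
      refine ⟨le_of_lt (hσpos i), ?_⟩
      have : σ i = (1 - s) * μ i + s * ρ i := by rw [hσi i]; ring
      rw [this]
      have h1 : (1 - s) * μ i ≤ (1 - s) * 1 :=
        mul_le_mul_of_nonneg_left (hp.1.1 i).2 (by linarith)
      have h2 : s * ρ i ≤ s * 1 := mul_le_mul_of_nonneg_left (hρ i).2 (le_of_lt hs0)
      linarith
    have hσsum : κ * n ≤ ∑ i, σ i := by
      have hsum : ∑ i, σ i = (1 - s) * (∑ i, μ i) + s * (∑ i, ρ i) := by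
        rw [Finset.mul_sum, Finset.mul_sum, ← Finset.sum_add_distrib]
        apply Finset.sum_congr rfl
        intro i _
        rw [hσi i]; ring
      rw [hsum]
      have h1 : (1 - s) * (κ * n) ≤ (1 - s) * (∑ i, μ i) :=
        mul_le_mul_of_nonneg_left hp.1.2 (by linarith)
      have h2 : s * (κ * n) ≤ s * (∑ i, ρ i) := mul_le_mul_of_nonneg_left hρs (le_of_lt hs0)
      nlinarith
    have hupper : KLdiv σ b ≤ KLdiv μ b + s * E + s ^ 2 * C := by
      have hrw : KLdiv μ b + s * E + s ^ 2 * C =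
          ∑ i, ((μ i * Real.log (μ i / b i) + b i - μ i) +
            s * ((ρ i - μ i) * Real.log (μ i / b i)) + s ^ 2 * ((ρ i - μ i) ^ 2 / μ i)) := by
        rw [KLdiv, hEdef, hCdef, Finset.mul_sum, Finset.mul_sum,
          ← Finset.sum_add_distrib, ← Finset.sum_add_distrib]
      rw [hrw, KLdiv]
      apply Finset.sum_le_sum
      intro i _
      have hmpos := hσpos i
      have hμne : μ i ≠ 0 := ne_of_gt (hμpos i)
      have hbne : b i ≠ 0 := ne_of_gt (hb i)
      have hlog1 : Real.log (σ i / b i) = Real.log (σ i / μ i) + Real.log (μ i / b i) := by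
        rw [← Real.log_mul (ne_of_gt (div_pos hmpos (hμpos i)))
          (ne_of_gt (div_pos (hμpos i) (hb i)))]
        congr 1
        field_simp
      have hlog2 : Real.log (σ i / μ i) ≤ σ i / μ i - 1 :=
        Real.log_le_sub_one_of_pos (div_pos hmpos (hμpos i))
      have hkey : σ i * Real.log (σ i / μ i) ≤
          s * (ρ i - μ i) + s ^ 2 * ((ρ i - μ i) ^ 2 / μ i) := by
        have h1 : σ i * Real.log (σ i / μ i) ≤ σ i * (σ i / μ i - 1) :=
          mul_le_mul_of_nonneg_left hlog2 (le_of_lt hmpos)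
        have h2 : σ i * (σ i / μ i - 1) =
            s * (ρ i - μ i) + s ^ 2 * ((ρ i - μ i) ^ 2 / μ i) := by
          rw [hσi i]
          field_simp
          ring
        linarith
      have h3 : σ i * Real.log (σ i / b i) =
          σ i * Real.log (σ i / μ i) + σ i * Real.log (μ i / b i) := by
        rw [hlog1]; ring
      have h4 : σ i * Real.log (μ i / b i) =
          μ i * Real.log (μ i / b i) + s * ((ρ i - μ i) * Real.log (μ i / b i)) := by
        rw [hσi i]; ring
      rw [h3, h4, hσi i]
      linarith
    have hmin : KLdiv μ b ≤ KLdiv σ b := hp.2 σ hσbdd hσsum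
    have hfin : 0 ≤ E + s * C := by
      have h1 : 0 ≤ s * E + s ^ 2 * C := by linarith
      have h2 : s * (E + s * C) = s * E + s ^ 2 * C := by ring
      nlinarith
    have h5 : s * C ≤ (-E / (2 * C + 1)) * C := mul_le_mul_of_nonneg_right hsE hC
    have h6 : (-E / (2 * C + 1)) * C < -E := by
      rw [div_mul_eq_mul_div, div_lt_iff₀ (by linarith)]
      nlinarith
    linarith
  linarith [hident]

lemma log_ge_two_mul {x : ℝ} (hx : 1 ≤ x) : 2 * (x - 1) / (x + 1) ≤ Real.log x := by
  set f : ℝ → ℝ := fun z => Real.log z - 2 * (z - 1) / (z + 1) with hf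
  have hder : ∀ y : ℝ, 0 < y → HasDerivAt f (y⁻¹ - 4 / (y + 1) ^ 2) y := by
    intro y hy
    have h1 : HasDerivAt Real.log y⁻¹ y := Real.hasDerivAt_log (ne_of_gt hy)
    have hnum : HasDerivAt (fun z : ℝ => 2 * (z - 1)) 2 y := by
      simpa using ((hasDerivAt_id y).sub_const 1).const_mul 2
    have hden : HasDerivAt (fun z : ℝ => z + 1) 1 y := (hasDerivAt_id y).add_const 1
    have hdne : y + 1 ≠ 0 := by linarith
    have h2 : HasDerivAt (fun z : ℝ => 2 * (z - 1) / (z + 1))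
        ((2 * (y + 1) - 2 * (y - 1) * 1) / (y + 1) ^ 2) y := hnum.div hden hdne
    have h3 : (2 * (y + 1) - 2 * (y - 1) * 1) / (y + 1) ^ 2 = 4 / (y + 1) ^ 2 := by
      congr 1; ring
    rw [h3] at h2
    exact h1.sub h2
  have hmono : MonotoneOn f (Set.Ici 1) := by
    apply monotoneOn_of_deriv_nonneg (convex_Ici 1)
    · apply ContinuousOn.sub
      · apply Real.continuousOn_log.mono
        intro z hz
        simp only [Set.mem_Ici] at hz
        simp only [Set.mem_compl_iff, Set.mem_singleton_iff]
        intro h0; rw [h0] at hz; linarith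
      · apply ContinuousOn.div
        · fun_prop
        · fun_prop
        · intro z hz
          simp only [Set.mem_Ici] at hz
          intro h0; linarith
    · intro z hz
      rw [interior_Ici] at hz
      simp only [Set.mem_Ioi] at hz
      exact (hder z (by linarith)).differentiableAt.differentiableWithinAt
    · intro z hz
      rw [interior_Ici] at hz
      simp only [Set.mem_Ioi] at hz
      have hz0 : 0 < z := by linarith
      rw [(hder z hz0).deriv]
      rw [sub_nonneg, div_le_iff₀ (by positivity), inv_mul_eq_div, le_div_iff₀ hz0]
      nlinarith
  have h1 : f 1 ≤ f x := hmono (Set.mem_Ici.mpr le_rfl) (Set.mem_Ici.mpr hx) hx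
  have h2 : f 1 = 0 := by simp [hf]
  have : 0 ≤ f x := h2 ▸ h1
  simp only [hf, sub_nonneg] at this
  exact this

lemma sym_term_aux {a c : ℝ} (hc : 0 < c) (hca : c ≤ a) :
    2 * (a - c) ^ 2 / (a + c) ≤ (a - c) * Real.log (a / c) := by
  have ha : 0 < a := lt_of_lt_of_le hc hca
  have hx : 1 ≤ a / c := (one_le_div hc).mpr hca
  have h1 : 2 * (a / c - 1) / (a / c + 1) ≤ Real.log (a / c) := log_ge_two_mul hx
  have h2 : 2 * (a / c - 1) / (a / c + 1) = 2 * (a - c) / (a + c) := by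
    rw [div_eq_div_iff (by positivity) (by positivity)]
    field_simp
  rw [h2] at h1
  have h3 : 0 ≤ a - c := by linarith
  have := mul_le_mul_of_nonneg_left h1 h3
  calc 2 * (a - c) ^ 2 / (a + c) = (a - c) * (2 * (a - c) / (a + c)) := by
        field_simp
    _ ≤ (a - c) * Real.log (a / c) := this

lemma sym_term {a c : ℝ} (ha : 0 < a) (hc : 0 < c) :
    2 * (a - c) ^ 2 / (a + c) ≤ (a - c) * Real.log (a / c) := by
  rcases le_total c a with hca | hac
  · exact sym_term_aux hc hca
  · have h := sym_term_aux ha hac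
    have e1 : Real.log (a / c) = - Real.log (c / a) := by rw [← Real.log_inv, inv_div]
    have e2 : (c - a) * Real.log (c / a) = (a - c) * Real.log (a / c) := by
      rw [e1]; ring
    have e3 : 2 * (c - a) ^ 2 / (c + a) = 2 * (a - c) ^ 2 / (a + c) := by
      rw [add_comm c a]; congr 2; ring
    rw [e3, e2] at h
    exact h

/-- Existence of the Bregman projection onto the κ-dense bounded measures. -/
lemma exists_proj {n : ℕ} (κ : ℝ) (hκ1 : κ ≤ 1) (b : Fin n → ℝ) (hb : ∀ i, 0 < b i) :
    ∃ ν : Fin n → ℝ, IsBregmanProj κ b ν := by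
  set Γ : Set (Fin n → ℝ) := {ρ | IsBddMeasure ρ ∧ κ * n ≤ ∑ i, ρ i} with hΓ
  have hΓeq : Γ = (Set.univ.pi fun _ : Fin n => Set.Icc (0:ℝ) 1) ∩
      {ρ | κ * n ≤ ∑ i, ρ i} := by
    ext ρ
    simp only [hΓ, Set.mem_setOf_eq, Set.mem_inter_iff, Set.mem_pi, Set.mem_univ,
      forall_true_left, Set.mem_Icc, IsBddMeasure]
  have hcomp : IsCompact Γ := by
    rw [hΓeq]
    exact (isCompact_univ_pi fun _ => isCompact_Icc).inter_right
      (isClosed_le continuous_const (by fun_prop))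
  have hne : Γ.Nonempty := by
    refine ⟨fun _ => 1, ⟨fun i => ⟨zero_le_one, le_rfl⟩, ?_⟩⟩
    simp
    calc κ * n ≤ 1 * n := mul_le_mul_of_nonneg_right hκ1 (Nat.cast_nonneg n)
      _ = n := one_mul _
  have hcont : ContinuousOn (fun ρ : Fin n → ℝ => KLdiv ρ b) Γ := by
    have hgc : Continuous (fun ρ : Fin n → ℝ =>
        ∑ i, (ρ i * Real.log (ρ i) - ρ i * Real.log (b i) + b i - ρ i)) := by
      apply continuous_finset_sum
      intro i _
      have h1 : Continuous (fun ρ : Fin n → ℝ => ρ i * Real.log (ρ i)) :=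
        Real.continuous_mul_log.comp (continuous_apply i)
      fun_prop
    apply ContinuousOn.congr hgc.continuousOn
    intro ρ hρ
    rw [hΓ] at hρ
    simp only [KLdiv]
    apply Finset.sum_congr rfl
    intro i _
    rcases eq_or_lt_of_le (hρ.1 i).1 with h0 | h0
    · rw [← h0]; simp
    · rw [Real.log_div (ne_of_gt h0) (ne_of_gt (hb i))]; ring
  obtain ⟨ν, hνΓ, hmin⟩ := hcomp.exists_isMinOn hne hcont
  exact ⟨ν, ⟨hνΓ.1, hνΓ.2⟩, fun ρ h1 h2 => hmin ⟨h1, h2⟩⟩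

/-- Shift identity for KL against an exponentially reweighted base. -/
lemma KL_shift {n : ℕ} {κ : ℝ} (hκ : 0 < κ) (c : Fin n → ℝ) {ρ : Fin n → ℝ}
    (hρ : ∀ i, 0 ≤ ρ i) :
    KLdiv ρ (fun i => Real.exp (-(c i)) * κ) =
      KLdiv ρ (fun _ => κ) + ∑ i, ρ i * c i +
        ((∑ i, Real.exp (-(c i)) * κ) - κ * n) := by
  rw [KLdiv, KLdiv]
  have hrw : ∀ i : Fin n,
      ρ i * Real.log (ρ i / (Real.exp (-(c i)) * κ)) + Real.exp (-(c i)) * κ - ρ i =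
      (ρ i * Real.log (ρ i / κ) + κ - ρ i) + ρ i * c i +
        (Real.exp (-(c i)) * κ - κ) := by
    intro i
    rcases eq_or_lt_of_le (hρ i) with h0 | h0
    · rw [← h0]; ring_nf
    · have e1 : Real.log (ρ i / (Real.exp (-(c i)) * κ)) =
          Real.log (ρ i) - (-(c i) + Real.log κ) := by
        rw [Real.log_div (ne_of_gt h0) (by positivity), Real.log_mul (by positivity)
          (ne_of_gt hκ), Real.log_exp]
      have e2 : Real.log (ρ i / κ) = Real.log (ρ i) - Real.log κ :=
        Real.log_div (ne_of_gt h0) (ne_of_gt hκ)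
      rw [e1, e2]; ring
  rw [Finset.sum_congr rfl (fun i _ => hrw i)]
  rw [Finset.sum_add_distrib, Finset.sum_add_distrib, Finset.sum_sub_distrib]
  simp [Finset.sum_sub_distrib, Finset.mul_sum]
  ring

lemma stability_aux {n : ℕ} {a b lv : Fin n → ℝ} {lam K : ℝ}
    (hlam : 0 ≤ lam) (hK : 0 ≤ K)
    (hpa : ∀ i, 0 < a i) (hpb : ∀ i, 0 < b i)
    (hsa : ∑ i, a i = K) (hsb : ∑ i, b i = K)
    (hl0 : ∀ i, 0 ≤ lv i) (hl1 : ∀ i, lv i ≤ 1)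
    (hkl : KLdiv a b + KLdiv b a ≤ lam * (∑ i, a i * lv i - ∑ i, b i * lv i)) :
    ∑ i, (a i - b i) * lv i ≤ lam * K := by
  have hsym : KLdiv a b + KLdiv b a = ∑ i, (a i - b i) * Real.log (a i / b i) := by
    rw [KLdiv, KLdiv, ← Finset.sum_add_distrib]
    apply Finset.sum_congr rfl
    intro i _
    have e1 : Real.log (b i / a i) = - Real.log (a i / b i) := by
      rw [← Real.log_inv, inv_div]
    rw [e1]; ring
  have hsymlb : ∑ i, 2 * (a i - b i) ^ 2 / (a i + b i) ≤
      ∑ i, (a i - b i) * Real.log (a i / b i) :=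
    Finset.sum_le_sum fun i _ => sym_term (hpa i) (hpb i)
  set d1 : ℝ := ∑ i, |a i - b i| * lv i with hd1def
  have hd1nn : 0 ≤ d1 :=
    Finset.sum_nonneg fun i _ => mul_nonneg (abs_nonneg _) (hl0 i)
  have hdled1 : ∑ i, (a i - b i) * lv i ≤ d1 :=
    Finset.sum_le_sum fun i _ => mul_le_mul_of_nonneg_right (le_abs_self _) (hl0 i)
  have hdiff : ∑ i, (a i - b i) * lv i = ∑ i, a i * lv i - ∑ i, b i * lv i := by
    rw [← Finset.sum_sub_distrib]
    exact Finset.sum_congr rfl fun i _ => by ring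
  have hp : ∀ i, 0 < a i + b i := fun i => by have := hpa i; have := hpb i; linarith
  have hCS : d1 ^ 2 ≤ (∑ i, 2 * (a i - b i) ^ 2 / (a i + b i)) *
      (∑ i, (lv i) ^ 2 * ((a i + b i) / 2)) := by
    have hcs := Finset.sum_mul_sq_le_sq_mul_sq Finset.univ
      (fun i => |a i - b i| * Real.sqrt (2 / (a i + b i)))
      (fun i => lv i * Real.sqrt ((a i + b i) / 2))
    have e1 : ∀ i : Fin n,
        (|a i - b i| * Real.sqrt (2 / (a i + b i))) *
          (lv i * Real.sqrt ((a i + b i) / 2)) = |a i - b i| * lv i := by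
      intro i
      have hpi := hp i
      have hne : a i + b i ≠ 0 := ne_of_gt hpi
      have e2 : Real.sqrt (2 / (a i + b i)) * Real.sqrt ((a i + b i) / 2) = 1 := by
        rw [← Real.sqrt_mul (div_nonneg (by norm_num) hpi.le)]
        have e0 : 2 / (a i + b i) * ((a i + b i) / 2) = 1 := by
          field_simp
        rw [e0, Real.sqrt_one]
      calc (|a i - b i| * Real.sqrt (2 / (a i + b i))) *
            (lv i * Real.sqrt ((a i + b i) / 2))
          = (|a i - b i| * lv i) *
            (Real.sqrt (2 / (a i + b i)) * Real.sqrt ((a i + b i) / 2)) := by ring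
        _ = |a i - b i| * lv i := by rw [e2, mul_one]
    have e3 : ∀ i : Fin n, (|a i - b i| * Real.sqrt (2 / (a i + b i))) ^ 2 =
        2 * (a i - b i) ^ 2 / (a i + b i) := by
      intro i
      have := hp i
      rw [mul_pow, Real.sq_sqrt (by positivity), sq_abs]
      field_simp
    have e4 : ∀ i : Fin n, (lv i * Real.sqrt ((a i + b i) / 2)) ^ 2 =
        (lv i) ^ 2 * ((a i + b i) / 2) := by
      intro i
      have := hp i
      rw [mul_pow, Real.sq_sqrt (by positivity)]
    rw [Finset.sum_congr rfl (fun i _ => e1 i)] at hcs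
    rw [Finset.sum_congr rfl (fun i _ => e3 i), Finset.sum_congr rfl (fun i _ => e4 i)]
      at hcs
    exact hcs
  have hS2 : ∑ i, (lv i) ^ 2 * ((a i + b i) / 2) ≤ K := by
    have hle : ∀ i : Fin n, (lv i) ^ 2 * ((a i + b i) / 2) ≤ (a i + b i) / 2 := by
      intro i
      have h1 := hp i
      have h2 := hl0 i
      have h3 := hl1 i
      have h4 : lv i ^ 2 ≤ 1 := by nlinarith
      have h5 : (0:ℝ) ≤ (a i + b i) / 2 := by linarith
      have := mul_le_mul_of_nonneg_right h4 h5
      linarith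
    calc ∑ i, (lv i) ^ 2 * ((a i + b i) / 2) ≤ ∑ i, (a i + b i) / 2 :=
        Finset.sum_le_sum fun i _ => hle i
      _ = ((∑ i, a i) + (∑ i, b i)) / 2 := by
          rw [← Finset.sum_add_distrib, ← Finset.sum_div]
      _ = K := by rw [hsa, hsb]; ring
  have hS2nn : 0 ≤ ∑ i, (lv i) ^ 2 * ((a i + b i) / 2) :=
    Finset.sum_nonneg fun i _ => by have := hp i; positivity
  have hS1le : ∑ i, 2 * (a i - b i) ^ 2 / (a i + b i) ≤ lam * d1 := by
    have h6 : lam * (∑ i, a i * lv i - ∑ i, b i * lv i) ≤ lam * d1 := by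
      apply mul_le_mul_of_nonneg_left _ hlam
      rw [← hdiff]; exact hdled1
    linarith
  have hd1sq : d1 ^ 2 ≤ (lam * d1) * K := by
    calc d1 ^ 2 ≤ _ * _ := hCS
      _ ≤ (lam * d1) * K := by
          apply mul_le_mul hS1le hS2 hS2nn (mul_nonneg hlam hd1nn)
  have hd1fin : d1 ≤ lam * K := by
    rcases eq_or_lt_of_le hd1nn with h0 | h0
    · rw [← h0]; positivity
    · have h7 : d1 * d1 ≤ (lam * K) * d1 := by nlinarith
      exact le_of_mul_le_mul_right h7 h0
  linarith


set_option maxHeartbeats 1000000 in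
/-- **Round bound for boosting via lazy Bregman projection.**  Running the lazy
dense multiplicative-weights booster with learning rate `λ = γ/4` against a weak
learner with advantage `γ` for `T ≥ 16 log(1/κ)/γ²` rounds yields an aggregate
`H = (1/T)Σ_t h_t` with margin `> γ` on all but `κn` examples, while every
distribution supplied to the weak learner is `1/(κn)`-smooth. -/
theorem lazy_bregman_round_bound {X : Type*} {n : ℕ} (hn : 0 < n)
    (x : Fin n → X) (y : Fin n → ℝ) (hy : ∀ i, y i = 1 ∨ y i = -1)
    (κ γ : ℝ) (hκ : κ ∈ Set.Ioo (0:ℝ) 1) (hγ : γ ∈ Set.Ioo (0:ℝ) 1)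
    (T : ℕ) (hT : 16 * Real.log (1 / κ) / γ ^ 2 ≤ T)
    (h : ℕ → X → ℝ) (hbd : ∀ t z, |h t z| ≤ 1)
    (μ : ℕ → Fin n → ℝ)
    (hproj : ∀ t, 1 ≤ t → t ≤ T →
      IsBregmanProj κ
        (fun i =>
          Real.exp (-(γ / 4) * ∑ j ∈ Finset.Ico 1 t, (1 - (1 / 2) * |h j (x i) - y i|))
            * κ)
        (μ t))
    (hadv : ∀ t, 1 ≤ t → t ≤ T →
      (1 / 2) * ∑ i, (μ t i / ∑ k, μ t k) * |h t (x i) - y i| ≤ 1 / 2 - γ) :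
    ((Set.ncard
        {i : Fin n | y i * ((1 / (T : ℝ)) * ∑ t ∈ Finset.Icc 1 T, h t (x i)) ≤ γ} : ℝ)
      ≤ κ * n) ∧
    (∀ t, 1 ≤ t → t ≤ T → ∀ i, μ t i / ∑ k, μ t k ≤ 1 / (κ * n)) := by
  obtain ⟨hκ0, hκ1⟩ := hκ
  obtain ⟨hγ0, hγ1⟩ := hγ
  have hn' : (0:ℝ) < n := by exact_mod_cast hn
  have hK : 0 < κ * n := mul_pos hκ0 hn'
  have part2 : ∀ t, 1 ≤ t → t ≤ T → ∀ i, μ t i / ∑ k, μ t k ≤ 1 / (κ * n) := by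
    intro t ht1 ht2 i
    have hp := hproj t ht1 ht2
    have hS : κ * n ≤ ∑ k, μ t k := hp.1.2
    exact div_le_div₀ zero_le_one (hp.1.1 i).2 hK hS
  refine ⟨?_, part2⟩
  by_contra hcon
  push_neg at hcon
  -- basic positivity facts
  have hlog : 0 < Real.log (1 / κ) := Real.log_pos (one_lt_one_div hκ0 hκ1)
  have hTpos : (0:ℝ) < T := by
    have h2 : 0 < 16 * Real.log (1 / κ) / γ ^ 2 := by positivity
    linarith
  have hT1 : 1 ≤ T := by
    by_contra hc; push_neg at hc; interval_cases T; norm_num at hTpos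
  -- losses
  set ℓ : ℕ → Fin n → ℝ := fun t i => 1 - (1 / 2) * |h t (x i) - y i| with hℓdef
  have hyabs : ∀ t i, |h t (x i) - y i| = 1 - y i * h t (x i) := by
    intro t i
    have hb1 : |h t (x i)| ≤ 1 := hbd t (x i)
    rw [abs_le] at hb1
    rcases hy i with hyi | hyi <;> rw [hyi]
    · rw [abs_of_nonpos (by linarith)]; ring
    · rw [abs_of_nonneg (by linarith)]; ring
  have hℓ01 : ∀ t i, 0 ≤ ℓ t i ∧ ℓ t i ≤ 1 := by
    intro t i
    have hb1 : |h t (x i)| ≤ 1 := hbd t (x i)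
    rw [abs_le] at hb1
    have he := hyabs t i
    have hy1 : y i = 1 ∨ y i = -1 := hy i
    have habs : |h t (x i) - y i| ≤ 2 := by
      rw [he]; rcases hy1 with hyi | hyi <;> rw [hyi] <;> nlinarith
    have habs0 : 0 ≤ |h t (x i) - y i| := abs_nonneg _
    constructor <;> simp only [hℓdef] <;> linarith
  set Λ : ℕ → Fin n → ℝ := fun t i => ∑ j ∈ Finset.Ico 1 t, ℓ j i with hΛdef
  have hΛ0 : ∀ t i, 0 ≤ Λ t i :=
    fun t i => Finset.sum_nonneg fun j _ => (hℓ01 j i).1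
  set mt : ℕ → Fin n → ℝ := fun t i => Real.exp (-(γ / 4) * Λ t i) * κ with hmtdef
  have hproj0 : ∀ t, 1 ≤ t → t ≤ T → IsBregmanProj κ (mt t) (μ t) := hproj
  have hmtpos : ∀ t i, 0 < mt t i := fun t i => mul_pos (Real.exp_pos _) hκ0
  have hmtle : ∀ t i, mt t i ≤ κ := by
    intro t i
    have h1 : Real.exp (-(γ / 4) * Λ t i) ≤ 1 := by
      rw [Real.exp_le_one_iff]
      have := hΛ0 t i
      nlinarith
    calc mt t i = Real.exp (-(γ / 4) * Λ t i) * κ := rfl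
      _ ≤ 1 * κ := mul_le_mul_of_nonneg_right h1 (le_of_lt hκ0)
      _ = κ := one_mul _
  have hmtle1 : ∀ t i, mt t i ≤ 1 := fun t i => le_trans (hmtle t i) (le_of_lt hκ1)
  have hmtsum : ∀ t, ∑ i, mt t i ≤ κ * n := by
    intro t
    calc ∑ i, mt t i ≤ ∑ _i : Fin n, κ := Finset.sum_le_sum fun i _ => hmtle t i
      _ = κ * n := by rw [Finset.sum_const]; simp [mul_comm]
  -- the extended sequence of projections
  obtain ⟨μs, hμs⟩ := exists_proj κ (le_of_lt hκ1) (mt (T+1)) (fun i => hmtpos _ i)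
  set μ' : ℕ → Fin n → ℝ := fun t => if t = T + 1 then μs else μ t with hμ'def
  have hproj' : ∀ t, 1 ≤ t → t ≤ T + 1 → IsBregmanProj κ (mt t) (μ' t) := by
    intro t h1 h2
    by_cases ht : t = T + 1
    · rw [hμ'def]; simp only [ht, if_pos rfl]; rw [← ht]; exact ht ▸ hμs
    · have : μ' t = μ t := by rw [hμ'def]; simp only [if_neg ht]
      rw [this]; exact hproj0 t h1 (by omega)
  have hpos' : ∀ t, 1 ≤ t → t ≤ T + 1 → ∀ i, 0 < μ' t i := by
    intro t h1 h2 i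
    exact lt_of_lt_of_le (hmtpos t i)
      (proj_ge (hmtpos t) (hmtle1 t) (hproj' t h1 h2) i)
  have hsum' : ∀ t, 1 ≤ t → t ≤ T + 1 → ∑ i, μ' t i = κ * n := by
    intro t h1 h2
    exact proj_sum_eq (hmtpos t) (hmtsum t) (hproj' t h1 h2)
  -- the FTRL objective
  set G : ℕ → (Fin n → ℝ) → ℝ :=
    fun s ρ => KLdiv ρ (fun _ => κ) + ∑ i, ρ i * (γ / 4 * Λ s i) with hGdef
  have hshift : ∀ s (ρ : Fin n → ℝ), (∀ i, 0 ≤ ρ i) →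
      KLdiv ρ (mt s) = G s ρ + ((∑ i, mt s i) - κ * n) := by
    intro s ρ hρ
    have hmteq : mt s = fun i => Real.exp (-(γ / 4 * Λ s i)) * κ := by
      funext i
      show Real.exp (-(γ / 4) * Λ s i) * κ = _
      rw [neg_mul]
    rw [hmteq, KL_shift hκ0 (fun i => γ / 4 * Λ s i) hρ, hGdef]
  have hGmin : ∀ s, 1 ≤ s → s ≤ T + 1 → ∀ ρ : Fin n → ℝ, IsBddMeasure ρ →
      κ * n ≤ ∑ i, ρ i → G s (μ' s) + KLdiv ρ (μ' s) ≤ G s ρ := by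
    intro s h1 h2 ρ hρ hρs
    have hp := hproj' s h1 h2
    have hpy := proj_pythagoras (hmtpos s) (hpos' s h1 h2) hp hρ hρs
    rw [hshift s (μ' s) (fun i => (hp.1.1 i).1), hshift s ρ (fun i => (hρ i).1)] at hpy
    linarith
  have hΛsucc : ∀ s, 1 ≤ s → ∀ i, Λ (s+1) i = Λ s i + ℓ s i := by
    intro s hs i
    rw [hΛdef]
    exact Finset.sum_Ico_succ_top hs _
  have hGsucc : ∀ s (ρ : Fin n → ℝ), 1 ≤ s →
      G (s+1) ρ = G s ρ + γ / 4 * ∑ i, ρ i * ℓ s i := by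
    intro s ρ hs
    rw [hGdef]
    simp only []
    rw [Finset.mul_sum, add_assoc, ← Finset.sum_add_distrib]
    congr 1
    apply Finset.sum_congr rfl
    intro i _
    rw [hΛsucc s hs i]; ring
  -- be-the-leader induction
  have hbddΓ : ∀ t, 1 ≤ t → t ≤ T + 1 →
      IsBddMeasure (μ' t) ∧ κ * n ≤ ∑ i, μ' t i :=
    fun t h1 h2 => (hproj' t h1 h2).1
  have btl : ∀ s, 1 ≤ s → s ≤ T + 1 →
      G 1 (μ' 1) + γ / 4 * ∑ t ∈ Finset.Ico 1 s, (∑ i, μ' (t+1) i * ℓ t i)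
        ≤ G s (μ' s) := by
    intro s hs1
    induction s, hs1 using Nat.le_induction with
    | base => intro _; simp
    | succ s hs ih =>
      intro hs2
      have hsT1 : s ≤ T + 1 := by omega
      have hb := hbddΓ (s+1) (by omega) (by omega)
      have h3 := hGmin s hs hsT1 (μ' (s+1)) hb.1 hb.2
      have h4 : 0 ≤ KLdiv (μ' (s+1)) (μ' s) :=
        KLdiv_nonneg (fun i => (hb.1 i).1) (hpos' s hs hsT1)
      have h5 := ih hsT1
      have h1 := hGsucc s (μ' (s+1)) hs
      rw [Finset.sum_Ico_succ_top hs, mul_add, h1]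
      have e1 : G 1 (μ' 1) + γ / 4 * ∑ t ∈ Finset.Ico 1 s, (∑ i, μ' (t+1) i * ℓ t i)
          ≤ G s (μ' (s+1)) := le_trans h5 (by linarith)
      linarith only [e1]
  -- stability
  have hstab : ∀ s, 1 ≤ s → s ≤ T →
      ∑ i, (μ' s i - μ' (s+1) i) * ℓ s i ≤ γ / 4 * (κ * n) := by
    intro s h1 h2
    have hs1T : s ≤ T + 1 := by omega
    have hs2T : s + 1 ≤ T + 1 := by omega
    have hs21 : 1 ≤ s + 1 := by omega
    have hbA := hbddΓ s h1 hs1T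
    have hbB := hbddΓ (s+1) hs21 hs2T
    have hA : G s (μ' s) + KLdiv (μ' (s+1)) (μ' s) ≤ G s (μ' (s+1)) :=
      hGmin s h1 hs1T (μ' (s+1)) hbB.1 hbB.2
    have hB : G (s+1) (μ' (s+1)) + KLdiv (μ' s) (μ' (s+1)) ≤ G (s+1) (μ' s) :=
      hGmin (s+1) hs21 hs2T (μ' s) hbA.1 hbA.2
    have hsucc1 := hGsucc s (μ' s) h1
    have hsucc2 := hGsucc s (μ' (s+1)) h1
    have hkl : KLdiv (μ' s) (μ' (s+1)) + KLdiv (μ' (s+1)) (μ' s) ≤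
        γ / 4 * (∑ i, μ' s i * ℓ s i - ∑ i, μ' (s+1) i * ℓ s i) := by
      rw [hsucc1] at hB
      rw [hsucc2] at hB
      have hd := add_le_add hA hB
      linarith only [hd]
    exact stability_aux (by linarith) (le_of_lt hK) (hpos' s h1 hs1T)
      (hpos' (s+1) hs21 hs2T) (hsum' s h1 hs1T) (hsum' (s+1) hs21 hs2T)
      (fun i => (hℓ01 s i).1) (fun i => (hℓ01 s i).2) hkl
  -- advantage lower bound
  have hadvt : ∀ t, 1 ≤ t → t ≤ T →
      (1/2 + γ) * (κ * n) ≤ ∑ i, μ' t i * ℓ t i := by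
    intro t h1 h2
    have hne : t ≠ T + 1 := by omega
    have hμeq : μ' t = μ t := by rw [hμ'def]; simp only [if_neg hne]
    have hSeq : ∑ k, μ t k = κ * n := by
      rw [← hμeq]; exact hsum' t h1 (by omega)
    have ha := hadv t h1 h2
    rw [hSeq] at ha
    have hrw : ∑ i, (μ t i / (κ * n)) * |h t (x i) - y i| =
        (∑ i, μ t i * |h t (x i) - y i|) / (κ * n) := by
      rw [Finset.sum_div]
      exact Finset.sum_congr rfl fun i _ => by ring
    rw [hrw] at ha
    have h5 : (∑ i, μ t i * |h t (x i) - y i|) / (κ * n) ≤ 1 - 2*γ := by linarith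
    rw [div_le_iff₀ hK] at h5
    have h6 : ∑ i, μ t i * ℓ t i =
        (κ*n) - (1/2) * ∑ i, μ t i * |h t (x i) - y i| := by
      have hterm : ∀ i : Fin n, μ t i * ℓ t i =
          μ t i - (1/2)*(μ t i * |h t (x i) - y i|) := by
        intro i
        show μ t i * (1 - 1 / 2 * |h t (x i) - y i|) = _
        ring
      rw [Finset.sum_congr rfl (fun i _ => hterm i), Finset.sum_sub_distrib, hSeq,
        ← Finset.mul_sum]
    rw [hμeq, h6]
    linarith
  -- the bad set
  classical
  set A : Set (Fin n) :=
    {i : Fin n | y i * ((1 / (T : ℝ)) * ∑ t ∈ Finset.Icc 1 T, h t (x i)) ≤ γ} with hAdef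
  have hAfin : A.Finite := Set.toFinite A
  set F : Finset (Fin n) := hAfin.toFinset with hFdef
  have hcard : ((A.ncard : ℕ) : ℝ) = ((F.card : ℕ) : ℝ) := by
    rw [Set.ncard_eq_toFinset_card A hAfin]
  rw [hcard] at hcon
  set a : ℝ := ((F.card : ℕ) : ℝ) with hadef
  have ha0 : 0 < a := lt_trans hK hcon
  set c : ℝ := κ * n / a with hcdef
  have hc0 : 0 < c := div_pos hK ha0
  have hc1 : c < 1 := by rw [hcdef, div_lt_one ha0]; exact hcon
  set ν : Fin n → ℝ := fun i => if i ∈ F then c else 0 with hνdef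
  have hνbdd : IsBddMeasure ν := by
    intro i
    have : ν i = if i ∈ F then c else 0 := rfl
    rw [this]
    split <;> constructor <;> linarith
  have hνsum : ∑ i, ν i = κ * n := by
    have : ∑ i, ν i = ∑ i ∈ F, c := by
      rw [hνdef]
      rw [Finset.sum_ite_mem, Finset.univ_inter]
    rw [this, Finset.sum_const, nsmul_eq_mul, ← hadef, hcdef]
    field_simp
  -- margin bound on the bad set
  have hmargin : ∀ i ∈ F, Λ (T+1) i ≤ (T:ℝ) * (1 + γ) / 2 := by
    intro i hiF
    have hiA : i ∈ A := (Set.Finite.mem_toFinset hAfin).mp hiF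
    have hyH : y i * ((1 / (T : ℝ)) * ∑ t ∈ Finset.Icc 1 T, h t (x i)) ≤ γ := hiA
    have hyS : y i * ∑ t ∈ Finset.Icc 1 T, h t (x i) ≤ γ * T := by
      have h7 : y i * ((1 / (T : ℝ)) * ∑ t ∈ Finset.Icc 1 T, h t (x i)) * T ≤ γ * T :=
        mul_le_mul_of_nonneg_right hyH (le_of_lt hTpos)
      have h8 : y i * ((1 / (T : ℝ)) * ∑ t ∈ Finset.Icc 1 T, h t (x i)) * T =
          y i * ∑ t ∈ Finset.Icc 1 T, h t (x i) := by
        field_simp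
      linarith [h8 ▸ h7]
    have hΛeq : Λ (T+1) i = (T:ℝ)/2 +
        (1/2) * (y i * ∑ t ∈ Finset.Icc 1 T, h t (x i)) := by
      have hstep : Λ (T+1) i = ∑ t ∈ Finset.Icc 1 T, ℓ t i := by
        rw [hΛdef]
        simp only []
        rw [Finset.Ico_add_one_right_eq_Icc]
      rw [hstep]
      have hterm : ∀ t ∈ Finset.Icc 1 T, ℓ t i = 1/2 + 1/2 * (y i * h t (x i)) := by
        intro t _
        show 1 - 1 / 2 * |h t (x i) - y i| = _
        rw [hyabs t i]; ring
      rw [Finset.sum_congr rfl hterm, Finset.sum_add_distrib, Finset.sum_const]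
      have hcardIcc : (Finset.Icc 1 T).card = T := by
        rw [Nat.card_Icc]; omega
      rw [hcardIcc, nsmul_eq_mul]
      have : ∑ t ∈ Finset.Icc 1 T, 1/2 * (y i * h t (x i)) =
          1/2 * (y i * ∑ t ∈ Finset.Icc 1 T, h t (x i)) := by
        simp only [Finset.mul_sum]
        try (apply Finset.sum_congr rfl; intro t _; ring)
      rw [this]
      ring
    rw [hΛeq]
    linarith
  have hνloss : ∑ i, ν i * Λ (T+1) i ≤ (κ * n) * ((T:ℝ) * (1 + γ) / 2) := by
    have hsplit : ∀ i : Fin n, ν i * Λ (T+1) i =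
        if i ∈ F then c * Λ (T+1) i else 0 := by
      intro i
      have : ν i = if i ∈ F then c else 0 := rfl
      rw [this]
      split <;> ring
    rw [Finset.sum_congr rfl (fun i _ => hsplit i), Finset.sum_ite_mem,
      Finset.univ_inter]
    calc ∑ i ∈ F, c * Λ (T+1) i ≤ ∑ _i ∈ F, c * ((T:ℝ) * (1 + γ) / 2) :=
        Finset.sum_le_sum fun i hi =>
          mul_le_mul_of_nonneg_left (hmargin i hi) (le_of_lt hc0)
      _ = a * (c * ((T:ℝ)*(1+γ)/2)) := by
          rw [Finset.sum_const, nsmul_eq_mul, ← hadef]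
      _ = (κ*n) * ((T:ℝ)*(1+γ)/2) := by
          rw [hcdef]; field_simp
  -- value of the regularizer at ν
  have hRν : KLdiv ν (fun _ => κ) = (κ*n) * Real.log (c / κ) := by
    rw [KLdiv]
    have hterm : ∀ i : Fin n, ν i * Real.log (ν i / κ) + κ - ν i =
        (if i ∈ F then c * Real.log (c/κ) else 0) + κ - ν i := by
      intro i
      have hνi : ν i = if i ∈ F then c else 0 := rfl
      rw [hνi]
      by_cases hi : i ∈ F
      · rw [if_pos hi, if_pos hi]
      · rw [if_neg hi, if_neg hi]; simp
    rw [Finset.sum_congr rfl (fun i _ => hterm i)]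
    have h8 : ∑ i : Fin n, ((if i ∈ F then c * Real.log (c/κ) else 0) + κ - ν i)
        = (∑ i : Fin n, (if i ∈ F then c * Real.log (c/κ) else 0))
          + (∑ _i : Fin n, κ) - ∑ i, ν i := by
      rw [Finset.sum_sub_distrib, Finset.sum_add_distrib]
    rw [h8, Finset.sum_ite_mem, Finset.univ_inter, Finset.sum_const,
      Finset.sum_const, hνsum, nsmul_eq_mul, nsmul_eq_mul, ← hadef]
    have h9 : a * (c * Real.log (c/κ)) = (κ*n) * Real.log (c/κ) := by
      rw [hcdef]; field_simp
    rw [h9, Finset.card_univ, Fintype.card_fin]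
    ring
  -- final chain
  have hfinal1 : G 1 (μ' 1) + γ/4 * ∑ t ∈ Finset.Ico 1 (T+1), (∑ i, μ' (t+1) i * ℓ t i)
      ≤ G (T+1) (μ' (T+1)) := btl (T+1) (by omega) (le_refl _)
  have hGT : G (T+1) (μ' (T+1)) ≤ G (T+1) ν := by
    have h9 := hGmin (T+1) (by omega) (le_refl _) ν hνbdd (le_of_eq hνsum.symm)
    have h10 : 0 ≤ KLdiv ν (μ' (T+1)) :=
      KLdiv_nonneg (fun i => (hνbdd i).1) (hpos' (T+1) (by omega) (le_refl _))
    linarith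
  have hG1 : 0 ≤ G 1 (μ' 1) := by
    have h11 : ∀ i : Fin n, Λ 1 i = 0 := by
      intro i
      show ∑ j ∈ Finset.Ico 1 1, ℓ j i = 0
      simp
    have h12 : ∑ i, μ' 1 i * (γ/4 * Λ 1 i) = 0 := by
      apply Finset.sum_eq_zero
      intro i _
      rw [h11 i]; ring
    have h13 : G 1 (μ' 1) = KLdiv (μ' 1) (fun _ => κ) + ∑ i, μ' 1 i * (γ/4 * Λ 1 i) :=
      rfl
    rw [h13, h12]
    have h14 := KLdiv_nonneg (ρ := μ' 1) (b := fun _ => κ)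
      (fun i => ((hbddΓ 1 (by omega) (by omega)).1 i).1) (fun _ => hκ0)
    linarith
  have hGν : G (T+1) ν = (κ*n) * Real.log (c/κ) + γ/4 * ∑ i, ν i * Λ (T+1) i := by
    have h15 : G (T+1) ν = KLdiv ν (fun _ => κ) + ∑ i, ν i * (γ/4 * Λ (T+1) i) := rfl
    rw [h15, hRν]
    congr 1
    rw [Finset.mul_sum]
    exact Finset.sum_congr rfl fun i _ => by ring
  have hper : ∀ t ∈ Finset.Ico 1 (T+1),
      (1/2 + γ) * (κ*n) - γ/4 * (κ*n) ≤ ∑ i, μ' (t+1) i * ℓ t i := by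
    intro t hti
    rw [Finset.mem_Ico] at hti
    have h1 := hti.1
    have h2 : t ≤ T := by omega
    have h13 := hstab t h1 h2
    have h14 := hadvt t h1 h2
    have h15 : ∑ i, (μ' t i - μ' (t+1) i) * ℓ t i =
        ∑ i, μ' t i * ℓ t i - ∑ i, μ' (t+1) i * ℓ t i := by
      rw [← Finset.sum_sub_distrib]
      exact Finset.sum_congr rfl fun i _ => by ring
    linarith
  have hsumlb : (T:ℝ) * ((1/2 + γ) * (κ*n) - γ/4 * (κ*n)) ≤
      ∑ t ∈ Finset.Ico 1 (T+1), (∑ i, μ' (t+1) i * ℓ t i) := by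
    have h16 := Finset.sum_le_sum hper
    rw [Finset.sum_const] at h16
    have hcard2 : (Finset.Ico 1 (T+1)).card = T := by rw [Nat.card_Ico]; omega
    rw [hcard2, nsmul_eq_mul] at h16
    exact h16
  have hlog2 : Real.log (c/κ) < Real.log (1/κ) := by
    apply Real.log_lt_log (div_pos hc0 hκ0)
    rw [div_lt_div_iff₀ hκ0 hκ0]
    nlinarith
  have hlog3 : Real.log (1/κ) ≤ γ^2 * (T:ℝ) / 16 := by
    rw [div_le_iff₀ (by positivity)] at hT
    nlinarith
  have hscale := mul_le_mul_of_nonneg_left hsumlb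
    (le_of_lt (by positivity : (0:ℝ) < γ/4))
  have h17 := mul_le_mul_of_nonneg_left hνloss
    (le_of_lt (by positivity : (0:ℝ) < γ/4))
  have hmain : γ/4 * ((T:ℝ) * ((1/2 + γ)*(κ*n) - γ/4*(κ*n))) ≤
      (κ*n) * Real.log (c/κ) + γ/4 * ((κ*n) * ((T:ℝ)*(1+γ)/2)) := by
    calc γ/4 * ((T:ℝ) * ((1/2 + γ)*(κ*n) - γ/4*(κ*n)))
        ≤ γ/4 * ∑ t ∈ Finset.Ico 1 (T+1), (∑ i, μ' (t+1) i * ℓ t i) := hscale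
      _ ≤ G (T+1) (μ' (T+1)) - G 1 (μ' 1) := by linarith only [hfinal1]
      _ ≤ G (T+1) ν := by linarith only [hGT, hG1]
      _ = (κ*n) * Real.log (c/κ) + γ/4 * ∑ i, ν i * Λ (T+1) i := hGν
      _ ≤ (κ*n) * Real.log (c/κ) + γ/4 * ((κ*n) * ((T:ℝ)*(1+γ)/2)) := by
          linarith only [h17]
  have hid : γ/4 * ((T:ℝ) * ((1/2 + γ)*(κ*n) - γ/4*(κ*n)))
      - γ/4 * ((κ*n) * ((T:ℝ)*(1+γ)/2)) = γ^2 * (T:ℝ) / 16 * (κ*n) := by ring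
  have h18 : γ^2*(T:ℝ)/16 * (κ*n) ≤ (κ*n) * Real.log (c/κ) := by linarith
  have h19 : (κ*n) * Real.log (c/κ) < (κ*n) * (γ^2*(T:ℝ)/16) :=
    mul_lt_mul_of_pos_left (lt_of_lt_of_le hlog2 hlog3) hK
  have h20 : γ^2*(T:ℝ)/16 * (κ*n) = (κ*n) * (γ^2*(T:ℝ)/16) := by ring
  linarith
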